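/- For z² ≠ 1, the operator L(z,r) on W ⊗ ℂ² is invertible with inverse L(z,r)^{-1} = (1−z²)^{-1} · diag(q^{-D} r^{-1}, q^D) · [[1−q^{2D}z², q^{-1}z a†],[qza, 1]]. -/
import Mathlib


noncomputable section

open Finsupp Matrix

/-- The infinite-dimensional space `W = ⊕_{j≥0} ℂ w^j`. -/
abbrev Wsp : Type := ℕ →₀ ℂ

abbrev EndW : Type := Module.End ℂ Wsp

/-- The basis vector `w^j`. -/
def wv (j : ℕ) : Wsp := Finsupp.single j 1

/-- The linear operator on `W` determined by its values on the basis. -/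
def mkOp (g : ℕ → Wsp) : EndW :=
  Finsupp.lsum ℂ fun j => LinearMap.toSpanSingleton ℂ Wsp (g j)

/-- The annihilation operator `a`. -/
def opA : EndW := mkOp fun j => match j with | 0 => 0 | i + 1 => wv i

/-- The creation operator `a†`. -/
def opAdag (q : ℂ) : EndW := mkOp fun j => (1 - q ^ (2 * (j + 1))) • wv (j + 1)

/-- The diagonal operator `f(D)`. -/
def opDiag (f : ℕ → ℂ) : EndW := mkOp fun j => f j • wv j

/-- The L-operator `L(z,r)` on `W ⊗ ℂ²`, written as a 2×2 matrix with entries in `End(W)`. -/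
def Lmat (q z r : ℂ) : Matrix (Fin 2) (Fin 2) EndW :=
  !![1, -(q⁻¹ * z) • opAdag q;
     -(q * z) • opA, opDiag fun j => 1 - q ^ (2 * (j + 1)) * z ^ 2] *
  !![r • opDiag (fun j => q ^ j), 0;
     0, opDiag fun j => (q ^ j)⁻¹]

/-- The claimed inverse of `L(z,r)`. -/
def LmatInv (q z r : ℂ) : Matrix (Fin 2) (Fin 2) EndW :=
  (1 - z ^ 2)⁻¹ •
    (!![r⁻¹ • opDiag (fun j => (q ^ j)⁻¹), 0;
        0, opDiag fun j => q ^ j] *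
     !![opDiag fun j => 1 - q ^ (2 * j) * z ^ 2, (q⁻¹ * z) • opAdag q;
        (q * z) • opA, 1])

lemma mkOp_wv (g : ℕ → Wsp) (j : ℕ) : mkOp g (wv j) = g j := by
  simp [mkOp, wv]

lemma endW_ext {f g : EndW} (h : ∀ j, f (wv j) = g (wv j)) : f = g := by
  refine Finsupp.lhom_ext' fun j => LinearMap.ext_ring ?_
  simpa [wv] using h j

/-- for `z² ≠ 1` the operator `L(z,r)` is invertible with the given inverse. -/
theorem Lmat_inverse (q z r : ℂ) (hq0 : q ≠ 0) (hq1 : q ≠ 1) (hqm1 : q ≠ -1)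
    (hr : r ≠ 0) (hz : z ^ 2 ≠ 1) :
    Lmat q z r * LmatInv q z r = 1 ∧ LmatInv q z r * Lmat q z r = 1 := by
  have hz' : (1 : ℂ) - z ^ 2 ≠ 0 := sub_ne_zero.mpr (Ne.symm hz)
  set α : EndW := (q⁻¹ * z) • opAdag q with hα
  set β : EndW := (q * z) • opA with hβ
  set Δ₀ : EndW := opDiag (fun j => 1 - q ^ (2 * j) * z ^ 2) with hΔ₀
  set Δ : EndW := opDiag (fun j => 1 - q ^ (2 * (j + 1)) * z ^ 2) with hΔ
  set A : Matrix (Fin 2) (Fin 2) EndW := !![1, -α; -β, Δ] with hA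
  set B : Matrix (Fin 2) (Fin 2) EndW := !![Δ₀, α; β, 1] with hB
  set D : Matrix (Fin 2) (Fin 2) EndW :=
    !![r • opDiag (fun j => q ^ j), 0; 0, opDiag fun j => (q ^ j)⁻¹] with hD
  set D' : Matrix (Fin 2) (Fin 2) EndW :=
    !![r⁻¹ • opDiag (fun j => (q ^ j)⁻¹), 0; 0, opDiag fun j => q ^ j] with hD'
  have hL : Lmat q z r = A * D := by
    rw [hA, hD, hα, hβ, hΔ]; simp only [Lmat, neg_smul (R := ℂ) (M := EndW)]
  have hLinv : LmatInv q z r = (1 - z ^ 2)⁻¹ • (D' * B) := rfl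
  -- entry identities on basis vectors
  have I1 : 1 * Δ₀ + -α * β = (1 - z ^ 2) • 1 := by
    apply endW_ext; intro j
    cases j <;>
      simp [hα, hβ, hΔ₀, opA, opAdag, opDiag, mkOp_wv, Module.End.mul_apply,
        LinearMap.add_apply, LinearMap.smul_apply, Module.End.one_apply,
        LinearMap.neg_apply, _root_.map_smul, smul_smul] <;>
      · match_scalars <;> field_simp <;> ring
  have I2 : -β * α + Δ * 1 = (1 - z ^ 2) • 1 := by
    apply endW_ext; intro j
    simp [hα, hβ, hΔ, opA, opAdag, opDiag, mkOp_wv, Module.End.mul_apply,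
      LinearMap.add_apply, LinearMap.smul_apply, Module.End.one_apply,
      LinearMap.neg_apply, _root_.map_smul, smul_smul]
    match_scalars <;> field_simp <;> ring
  have I3 : -β * Δ₀ + Δ * β = 0 := by
    apply endW_ext; intro j
    cases j <;>
      simp [hα, hβ, hΔ₀, hΔ, opA, opAdag, opDiag, mkOp_wv, Module.End.mul_apply,
        LinearMap.add_apply, LinearMap.smul_apply, LinearMap.zero_apply,
        LinearMap.neg_apply, _root_.map_smul, smul_smul] <;>
      · match_scalars <;> field_simp <;> ring
  have I4 : Δ₀ * -α + α * Δ = 0 := by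
    apply endW_ext; intro j
    simp [hα, hΔ₀, hΔ, opAdag, opDiag, mkOp_wv, Module.End.mul_apply,
      LinearMap.add_apply, LinearMap.smul_apply, LinearMap.zero_apply,
      LinearMap.neg_apply, _root_.map_smul, smul_smul]
    match_scalars <;> field_simp <;> ring
  have I5 : Δ₀ * 1 + α * -β = (1 - z ^ 2) • 1 := by
    apply endW_ext; intro j
    cases j <;>
      simp [hα, hβ, hΔ₀, opA, opAdag, opDiag, mkOp_wv, Module.End.mul_apply,
        LinearMap.add_apply, LinearMap.smul_apply, Module.End.one_apply,
        LinearMap.neg_apply, _root_.map_smul, smul_smul] <;>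
      · match_scalars <;> field_simp <;> ring
  have I6 : β * -α + 1 * Δ = (1 - z ^ 2) • 1 := by
    apply endW_ext; intro j
    simp [hα, hβ, hΔ, opA, opAdag, opDiag, mkOp_wv, Module.End.mul_apply,
      LinearMap.add_apply, LinearMap.smul_apply, Module.End.one_apply,
      LinearMap.neg_apply, _root_.map_smul, smul_smul]
    match_scalars <;> field_simp <;> ring
  have I7 : β * 1 + 1 * -β = 0 := by rw [mul_one, one_mul]; abel
  have I8 : 1 * α + -α * 1 = 0 := by rw [mul_one, one_mul]; abel
  -- diagonal products
  have D1 : (r • opDiag (fun j => q ^ j)) * (r⁻¹ • opDiag fun j => (q ^ j)⁻¹) = 1 := by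
    apply endW_ext; intro j
    simp [opDiag, mkOp_wv, Module.End.mul_apply, LinearMap.smul_apply,
      Module.End.one_apply, _root_.map_smul, smul_smul]
    match_scalars; field_simp
  have D2 : (opDiag fun j => (q ^ j)⁻¹) * (opDiag fun j => q ^ j) = 1 := by
    apply endW_ext; intro j
    simp [opDiag, mkOp_wv, Module.End.mul_apply, Module.End.one_apply,
      _root_.map_smul, smul_smul]
    match_scalars; field_simp
  have D3 : (r⁻¹ • opDiag (fun j => (q ^ j)⁻¹)) * (r • opDiag fun j => q ^ j) = 1 := by
    apply endW_ext; intro j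
    simp [opDiag, mkOp_wv, Module.End.mul_apply, LinearMap.smul_apply,
      Module.End.one_apply, _root_.map_smul, smul_smul]
    match_scalars; field_simp
  have D4 : (opDiag fun j => q ^ j) * (opDiag fun j => (q ^ j)⁻¹) = 1 := by
    apply endW_ext; intro j
    simp [opDiag, mkOp_wv, Module.End.mul_apply, Module.End.one_apply,
      _root_.map_smul, smul_smul]
    match_scalars; field_simp
  have hDD' : D * D' = 1 := by
    rw [hD, hD']
    rw [Matrix.mul_fin_two, Matrix.one_fin_two]
    simp [D1, D2]
  have hD'D : D' * D = 1 := by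
    rw [hD, hD']
    rw [Matrix.mul_fin_two, Matrix.one_fin_two]
    simp [D3, D4]
  have hAB : A * B = (1 - z ^ 2) • 1 := by
    rw [hA, hB, Matrix.mul_fin_two, Matrix.one_fin_two]
    rw [I1, I8, I3, I2]
    simp [Matrix.smul_of]
  have hBA : B * A = (1 - z ^ 2) • 1 := by
    rw [hA, hB, Matrix.mul_fin_two, Matrix.one_fin_two]
    rw [I5, I4, I7, I6]
    simp [Matrix.smul_of]
  constructor
  · rw [hL, hLinv, mul_smul_comm, Matrix.mul_assoc, ← Matrix.mul_assoc D D' B,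
      hDD', Matrix.one_mul, hAB, smul_smul, inv_mul_cancel₀ hz', one_smul]
  · rw [hL, hLinv, smul_mul_assoc, Matrix.mul_assoc, ← Matrix.mul_assoc B A D,
      hBA, smul_mul_assoc, Matrix.one_mul, ← mul_smul_comm,
      smul_smul, inv_mul_cancel₀ hz', one_smul, hD'D]
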